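/- Let K be an algebraically closed field, φ: 𝔸²_K → ℙ⁴_K the map φ(x,y) = [1 : x : y : xy : x²y²], and X the closure of φ(𝔸²) in ℙ⁴. For a = (a_1,a_2) ∈ K², let H_1(a) = {(a_1,y) : y ∈ K} and H_2(a) = {(x,a_2) : x ∈ K}. Then the closures of φ(H_1(a)) and φ(H_2(a)) in ℙ⁴ have disjoint intersections with X \ φ(𝔸²) if and only if a_1 = 0 or a_2 = 0. Specifically, the unique point at infinity of the closure of φ(H_1(a)) is [0:0:1:0:0] if a_1 = 0 and [0:0:0:0:1] if a_1 ≠ 0, and similarly for H_2(a) with [0:1:0:0:0] and [0:0:0:0:1]. -/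

import Mathlib

/-- The Zariski closure of a set of points of the projective space `ℙⁿ(K)`: the set of
points at which every homogeneous polynomial vanishing on `S` vanishes. -/
def zariskiClosure {K : Type*} [Field K] {n : ℕ}
    (S : Set (Projectivization K (Fin n → K))) : Set (Projectivization K (Fin n → K)) :=
  {x | ∀ (m : ℕ) (p : MvPolynomial (Fin n) K), p.IsHomogeneous m →
    (∀ y ∈ S, MvPolynomial.eval y.rep p = 0) → MvPolynomial.eval x.rep p = 0}

/-- The map `φ : 𝔸² → ℙ⁴`, `(x, y) ↦ [1 : x : y : xy : x²y²]`. -/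
noncomputable def phiG {K : Type*} [Field K] (p : K × K) :
    Projectivization K (Fin 5 → K) :=
  Projectivization.mk K ![1, p.1, p.2, p.1 * p.2, p.1 ^ 2 * p.2 ^ 2]
    (by intro h; have := congrFun h 0; simp at this)

open MvPolynomial Projectivization

section helpers

variable {K : Type*} [Field K]

lemma eval_smul_homog {n : ℕ} {p : MvPolynomial (Fin n) K} {m : ℕ}
    (hp : p.IsHomogeneous m) (c : K) (v : Fin n → K) :
    eval (c • v) p = c ^ m * eval v p := by
  rw [eval_eq, eval_eq, Finset.mul_sum]
  apply Finset.sum_congr rfl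
  intro d hd
  have hdeg : (∑ i ∈ d.support, d i) = m := by
    have := hp (mem_support_iff.mp hd)
    simpa [Finsupp.weight_apply, Finsupp.sum] using this
  calc coeff d p * ∏ i ∈ d.support, (c • v) i ^ d i
      = coeff d p * ∏ i ∈ d.support, (c ^ d i * v i ^ d i) := by
        simp [Pi.smul_apply, smul_eq_mul, mul_pow]
    _ = c ^ m * (coeff d p * ∏ i ∈ d.support, v i ^ d i) := by
        rw [Finset.prod_mul_distrib, Finset.prod_pow_eq_pow_sum, hdeg]; ring

lemma eval_rep_eq_zero_iff {n : ℕ} {p : MvPolynomial (Fin n) K} {m : ℕ}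
    (hp : p.IsHomogeneous m) (v : Fin n → K) (hv : v ≠ 0) :
    eval (Projectivization.mk K v hv).rep p = 0 ↔ eval v p = 0 := by
  obtain ⟨a, ha⟩ := exists_smul_eq_mk_rep K v hv
  rw [← ha, Units.smul_def, eval_smul_homog hp (a : K) v]
  simp [Units.ne_zero a, pow_ne_zero]

/-- Standard affine representative vector of `φ(q)`. -/
def stdv (q : K × K) : Fin 5 → K := ![1, q.1, q.2, q.1 * q.2, q.1 ^ 2 * q.2 ^ 2]

lemma stdv_ne (q : K × K) : stdv q ≠ (0 : Fin 5 → K) := by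
  intro h; have := congrFun h 0; simp [stdv] at this

lemma phiG_def (q : K × K) : phiG q = Projectivization.mk K (stdv q) (stdv_ne q) := rfl

lemma mem_zc_mk_iff {n : ℕ} (S : Set (Projectivization K (Fin n → K))) (v : Fin n → K)
    (hv : v ≠ 0) :
    Projectivization.mk K v hv ∈ zariskiClosure S ↔
      ∀ (m : ℕ) (p : MvPolynomial (Fin n) K), p.IsHomogeneous m →
        (∀ y ∈ S, eval y.rep p = 0) → eval v p = 0 := by
  constructor
  · intro hx m p hp hS
    exact (eval_rep_eq_zero_iff hp v hv).mp (hx m p hp hS)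
  · intro h m p hp hS
    exact (eval_rep_eq_zero_iff hp v hv).mpr (h m p hp hS)

lemma eval_stdv_zero_of_vanish {p : MvPolynomial (Fin 5) K} {m : ℕ}
    (hp : p.IsHomogeneous m) {S : Set (Projectivization K (Fin 5 → K))}
    (hS : ∀ y ∈ S, eval y.rep p = 0) {q : K × K} (hq : phiG q ∈ S) :
    eval (stdv q) p = 0 :=
  (eval_rep_eq_zero_iff hp (stdv q) (stdv_ne q)).mp (hS _ hq)

/-- Workhorse: a limit point of a polynomially-parametrized family lies in the closure. -/
lemma mem_closure_of_param [Infinite K] (S : Set (Projectivization K (Fin 5 → K)))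
    (w : Fin 5 → Polynomial K) (c : K → K) (q : K → K × K)
    (hq : ∀ s : K, s ≠ 0 → phiG (q s) ∈ S)
    (hw : ∀ s : K, s ≠ 0 → (fun i => (w i).eval s) = c s • stdv (q s))
    (v : Fin 5 → K) (hv : v ≠ 0)
    (hveq : (fun i => (w i).eval 0) = v) :
    Projectivization.mk K v hv ∈ zariskiClosure S := by
  rw [mem_zc_mk_iff]
  intro m p hp hS
  set qq : Polynomial K := eval₂ Polynomial.C w p with hqq
  have hqev : ∀ s : K, qq.eval s = eval (fun i => (w i).eval s) p := by
    intro s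
    rw [hqq, polynomial_eval_eval₂]
    have : ((Polynomial.evalRingHom s).comp Polynomial.C) = RingHom.id K := by
      ext r; simp
    rw [this]
    rfl
  have hroots : ∀ s : K, s ≠ 0 → qq.eval s = 0 := by
    intro s hs
    rw [hqev, hw s hs, eval_smul_homog hp]
    rw [eval_stdv_zero_of_vanish hp hS (hq s hs), mul_zero]
  have hq0 : qq = 0 := by
    apply Polynomial.eq_zero_of_infinite_isRoot
    apply Set.Infinite.mono (s := {x : K | x ≠ 0})
    · intro s hs; exact hroots s hs
    · exact Set.Finite.infinite_compl (Set.finite_singleton (0 : K))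
  have := hqev 0
  rw [hq0, hveq] at this
  simpa using this.symm

lemma not_range_of_zero (v : Fin 5 → K) (hv : v ≠ 0) (h0 : v 0 = 0) :
    Projectivization.mk K v hv ∉ Set.range (phiG (K := K)) := by
  rintro ⟨q, hq⟩
  rw [phiG_def, mk_eq_mk_iff'] at hq
  obtain ⟨a, ha⟩ := hq
  have := congrFun ha 0
  simp [stdv, h0] at this

/-- If `x` is in the closure of the image and its `0`-th coordinate is nonzero,
then `x` is in the image. -/
lemma rep_zero_eq_zero (x : Projectivization K (Fin 5 → K))
    (hx : x ∈ zariskiClosure (Set.range (phiG (K := K))))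
    (hnr : x ∉ Set.range (phiG (K := K))) : x.rep 0 = 0 := by
  by_contra h0
  apply hnr
  set r := x.rep with hr
  have hhom1 : (X 0 * X 3 - X 1 * X 2 : MvPolynomial (Fin 5) K).IsHomogeneous 2 :=
    ((isHomogeneous_X K (0 : Fin 5)).mul (isHomogeneous_X K 3)).sub
      ((isHomogeneous_X K 1).mul (isHomogeneous_X K 2))
  have hhom2 : (X 0 * X 4 - X 3 ^ 2 : MvPolynomial (Fin 5) K).IsHomogeneous 2 :=
    ((isHomogeneous_X K (0 : Fin 5)).mul (isHomogeneous_X K 4)).sub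
      ((isHomogeneous_X K 3).pow 2)
  have h1 : eval r (X 0 * X 3 - X 1 * X 2 : MvPolynomial (Fin 5) K) = 0 := by
    apply hx 2 _ hhom1
    rintro y ⟨q, rfl⟩
    rw [phiG_def, eval_rep_eq_zero_iff hhom1]
    simp [stdv]
  have h2 : eval r (X 0 * X 4 - X 3 ^ 2 : MvPolynomial (Fin 5) K) = 0 := by
    apply hx 2 _ hhom2
    rintro y ⟨q, rfl⟩
    rw [phiG_def, eval_rep_eq_zero_iff hhom2]
    simp [stdv, mul_pow]
  simp only [map_sub, map_mul, map_pow, eval_X] at h1 h2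
  refine ⟨(r 1 / r 0, r 2 / r 0), ?_⟩
  rw [phiG_def, ← Projectivization.mk_rep x, mk_eq_mk_iff']
  refine ⟨(r 0)⁻¹, funext fun i => ?_⟩
  fin_cases i
  · show (r 0)⁻¹ * r 0 = 1
    field_simp
  · show (r 0)⁻¹ * r 1 = r 1 / r 0
    field_simp
  · show (r 0)⁻¹ * r 2 = r 2 / r 0
    field_simp
  · show (r 0)⁻¹ * r 3 = r 1 / r 0 * (r 2 / r 0)
    field_simp
    linear_combination h1
  · show (r 0)⁻¹ * r 4 = (r 1 / r 0) ^ 2 * (r 2 / r 0) ^ 2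
    field_simp
    linear_combination (r 0) ^ 2 * h2 + (r 0 * r 3 + r 1 * r 2) * h1

end helpers

section parts

variable {K : Type*} [Field K] [IsAlgClosed K]

/-- relation `r₀r₄ = r₃²` on `X`. -/
lemma rep_rel2 (x : Projectivization K (Fin 5 → K))
    (hx : x ∈ zariskiClosure (Set.range (phiG (K := K)))) :
    x.rep 0 * x.rep 4 = x.rep 3 ^ 2 := by
  have hhom2 : (X 0 * X 4 - X 3 ^ 2 : MvPolynomial (Fin 5) K).IsHomogeneous 2 :=
    ((isHomogeneous_X K (0 : Fin 5)).mul (isHomogeneous_X K 4)).sub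
      ((isHomogeneous_X K 3).pow 2)
  have h2 : eval x.rep (X 0 * X 4 - X 3 ^ 2 : MvPolynomial (Fin 5) K) = 0 := by
    apply hx 2 _ hhom2
    rintro y ⟨q, rfl⟩
    rw [phiG_def, eval_rep_eq_zero_iff hhom2]
    simp [stdv, mul_pow]
  simp only [map_sub, map_mul, map_pow, eval_X] at h2
  linear_combination h2

-- non-vanishing proofs for the three special points
lemma ne_e1 : (![0, 1, 0, 0, 0] : Fin 5 → K) ≠ 0 := by
  intro h; have := congrFun h 1; simp at this

lemma ne_e2 : (![0, 0, 1, 0, 0] : Fin 5 → K) ≠ 0 := by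
  intro h; have := congrFun h 2; simp at this

lemma ne_e4 : (![0, 0, 0, 0, 1] : Fin 5 → K) ≠ 0 := by
  intro h; have := congrFun h 4; simp at this

lemma e2_mem_H1 : Projectivization.mk K ![0, 0, 1, 0, 0] ne_e2 ∈
    zariskiClosure (phiG '' {p : K × K | p.1 = 0}) := by
  apply mem_closure_of_param _ ![Polynomial.X, 0, 1, 0, 0] id (fun s => (0, s⁻¹))
  · intro s hs; exact ⟨(0, s⁻¹), rfl, rfl⟩
  · intro s hs; funext i; fin_cases i <;> simp [stdv] <;> field_simp
  · funext i; fin_cases i <;> simp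

lemma e2_mem_X : Projectivization.mk K ![0, 0, 1, 0, 0] ne_e2 ∈
    zariskiClosure (Set.range (phiG (K := K))) := by
  apply mem_closure_of_param _ ![Polynomial.X, 0, 1, 0, 0] id (fun s => (0, s⁻¹))
  · intro s hs; exact ⟨(0, s⁻¹), rfl⟩
  · intro s hs; funext i; fin_cases i <;> simp [stdv] <;> field_simp
  · funext i; fin_cases i <;> simp

lemma e1_mem_H2 : Projectivization.mk K ![0, 1, 0, 0, 0] ne_e1 ∈
    zariskiClosure (phiG '' {p : K × K | p.2 = 0}) := by
  apply mem_closure_of_param _ ![Polynomial.X, 1, 0, 0, 0] id (fun s => (s⁻¹, 0))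
  · intro s hs; exact ⟨(s⁻¹, 0), rfl, rfl⟩
  · intro s hs; funext i; fin_cases i <;> simp [stdv] <;> field_simp
  · funext i; fin_cases i <;> simp

lemma e1_mem_X : Projectivization.mk K ![0, 1, 0, 0, 0] ne_e1 ∈
    zariskiClosure (Set.range (phiG (K := K))) := by
  apply mem_closure_of_param _ ![Polynomial.X, 1, 0, 0, 0] id (fun s => (s⁻¹, 0))
  · intro s hs; exact ⟨(s⁻¹, 0), rfl⟩
  · intro s hs; funext i; fin_cases i <;> simp [stdv] <;> field_simp
  · funext i; fin_cases i <;> simp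

lemma e4_mem_H1 {a₁ : K} (ha : a₁ ≠ 0) : Projectivization.mk K ![0, 0, 0, 0, 1] ne_e4 ∈
    zariskiClosure (phiG '' {p : K × K | p.1 = a₁}) := by
  apply mem_closure_of_param _
    ![Polynomial.C a₁⁻¹ ^ 2 * Polynomial.X ^ 2, Polynomial.C a₁⁻¹ * Polynomial.X ^ 2,
      Polynomial.C a₁⁻¹ ^ 2 * Polynomial.X, Polynomial.C a₁⁻¹ * Polynomial.X, 1]
    (fun s => a₁⁻¹ ^ 2 * s ^ 2) (fun s => (a₁, s⁻¹))
  · intro s hs; exact ⟨(a₁, s⁻¹), rfl, rfl⟩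
  · intro s hs; funext i; fin_cases i <;> simp [stdv] <;> field_simp <;> ring
  · funext i; fin_cases i <;> simp

lemma e4_mem_H2 {a₂ : K} (ha : a₂ ≠ 0) : Projectivization.mk K ![0, 0, 0, 0, 1] ne_e4 ∈
    zariskiClosure (phiG '' {p : K × K | p.2 = a₂}) := by
  apply mem_closure_of_param _
    ![Polynomial.C a₂⁻¹ ^ 2 * Polynomial.X ^ 2, Polynomial.C a₂⁻¹ ^ 2 * Polynomial.X,
      Polynomial.C a₂⁻¹ * Polynomial.X ^ 2, Polynomial.C a₂⁻¹ * Polynomial.X, 1]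
    (fun s => a₂⁻¹ ^ 2 * s ^ 2) (fun s => (s⁻¹, a₂))
  · intro s hs; exact ⟨(s⁻¹, a₂), rfl, rfl⟩
  · intro s hs; funext i; fin_cases i <;> simp [stdv] <;> field_simp <;> ring
  · funext i; fin_cases i <;> simp

lemma e4_mem_X : Projectivization.mk K ![0, 0, 0, 0, 1] ne_e4 ∈
    zariskiClosure (Set.range (phiG (K := K))) := by
  apply mem_closure_of_param _
    ![Polynomial.X ^ 2, Polynomial.X ^ 2, Polynomial.X, Polynomial.X, 1]
    (fun s => s ^ 2) (fun s => ((1 : K), s⁻¹))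
  · intro s hs; exact ⟨(1, s⁻¹), rfl⟩
  · intro s hs; funext i; fin_cases i <;> simp [stdv] <;> field_simp <;> ring
  · funext i; fin_cases i <;> simp

end parts

section mainparts

variable {K : Type*} [Field K] [IsAlgClosed K]

lemma rep_coord_zero {T : Set (K × K)} {x : Projectivization K (Fin 5 → K)}
    (hx : x ∈ zariskiClosure (phiG '' T)) (i : Fin 5)
    (h : ∀ q ∈ T, stdv q i = 0) : x.rep i = 0 := by
  have := hx 1 (X i) (isHomogeneous_X K i) ?_
  · simpa using this
  · rintro y ⟨q, hq, rfl⟩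
    rw [phiG_def, eval_rep_eq_zero_iff (isHomogeneous_X K i)]
    simpa using h q hq

lemma hom_lin (a : K) (i j : Fin 5) :
    (X i - C a * X j : MvPolynomial (Fin 5) K).IsHomogeneous 1 := by
  have := (isHomogeneous_X K i).sub
    ((isHomogeneous_C (Fin 5) a).mul (isHomogeneous_X K j))
  simpa using this

lemma rep_lin {T : Set (K × K)} {x : Projectivization K (Fin 5 → K)}
    (hx : x ∈ zariskiClosure (phiG '' T)) (i j : Fin 5) (a : K)
    (h : ∀ q ∈ T, stdv q i = a * stdv q j) : x.rep i = a * x.rep j := by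
  have := hx 1 (X i - C a * X j) (hom_lin a i j) ?_
  · simp only [map_sub, map_mul, eval_X, eval_C] at this
    linear_combination this
  · rintro y ⟨q, hq, rfl⟩
    rw [phiG_def, eval_rep_eq_zero_iff (hom_lin a i j)]
    simp only [map_sub, map_mul, eval_X, eval_C]
    rw [h q hq]; ring

lemma part1 : zariskiClosure (phiG '' {p : K × K | p.1 = 0}) ∩
    (zariskiClosure (Set.range (phiG (K := K))) \ Set.range (phiG (K := K))) =
    {Projectivization.mk K ![0, 0, 1, 0, 0] ne_e2} := by
  apply Set.eq_singleton_iff_unique_mem.mpr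
  refine ⟨⟨e2_mem_H1, e2_mem_X, not_range_of_zero _ _ rfl⟩, ?_⟩
  rintro x ⟨hx1, hxX, hxNR⟩
  have h0 : x.rep 0 = 0 := rep_zero_eq_zero x hxX hxNR
  have h1 : x.rep 1 = 0 := rep_coord_zero hx1 1 (fun q hq => by simp [stdv]; exact hq)
  have h3 : x.rep 3 = 0 := rep_coord_zero hx1 3 (fun q hq => by
    have : q.1 = 0 := hq
    simp [stdv, this])
  have h4 : x.rep 4 = 0 := rep_coord_zero hx1 4 (fun q hq => by
    have : q.1 = 0 := hq
    simp [stdv, this])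
  rw [← Projectivization.mk_rep x, mk_eq_mk_iff']
  refine ⟨x.rep 2, funext fun i => ?_⟩
  fin_cases i <;> simp [h0, h1, h3, h4]

lemma part2 {a₁ : K} (ha : a₁ ≠ 0) :
    zariskiClosure (phiG '' {p : K × K | p.1 = a₁}) ∩
    (zariskiClosure (Set.range (phiG (K := K))) \ Set.range (phiG (K := K))) =
    {Projectivization.mk K ![0, 0, 0, 0, 1] ne_e4} := by
  apply Set.eq_singleton_iff_unique_mem.mpr
  refine ⟨⟨e4_mem_H1 ha, e4_mem_X, not_range_of_zero _ _ rfl⟩, ?_⟩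
  rintro x ⟨hx1, hxX, hxNR⟩
  have h0 : x.rep 0 = 0 := rep_zero_eq_zero x hxX hxNR
  have h3 : x.rep 3 = 0 := by
    have := rep_rel2 x hxX
    rw [h0, zero_mul] at this
    exact pow_eq_zero_iff (n := 2) (by norm_num) |>.mp this.symm
  have h1 : x.rep 1 = 0 := by
    have := rep_lin hx1 1 0 a₁ (fun q hq => by
      have : q.1 = a₁ := hq
      simp [stdv, this])
    rw [this, h0, mul_zero]
  have h2 : x.rep 2 = 0 := by
    have := rep_lin hx1 3 2 a₁ (fun q hq => by
      have : q.1 = a₁ := hq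
      simp [stdv, this, mul_comm])
    rw [h3] at this
    exact (mul_eq_zero.mp this.symm).resolve_left ha
  rw [← Projectivization.mk_rep x, mk_eq_mk_iff']
  refine ⟨x.rep 4, funext fun i => ?_⟩
  fin_cases i <;> simp [h0, h1, h2, h3]

lemma part3 : zariskiClosure (phiG '' {p : K × K | p.2 = 0}) ∩
    (zariskiClosure (Set.range (phiG (K := K))) \ Set.range (phiG (K := K))) =
    {Projectivization.mk K ![0, 1, 0, 0, 0] ne_e1} := by
  apply Set.eq_singleton_iff_unique_mem.mpr
  refine ⟨⟨e1_mem_H2, e1_mem_X, not_range_of_zero _ _ rfl⟩, ?_⟩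
  rintro x ⟨hx1, hxX, hxNR⟩
  have h0 : x.rep 0 = 0 := rep_zero_eq_zero x hxX hxNR
  have h2 : x.rep 2 = 0 := rep_coord_zero hx1 2 (fun q hq => by simp [stdv]; exact hq)
  have h3 : x.rep 3 = 0 := rep_coord_zero hx1 3 (fun q hq => by
    have : q.2 = 0 := hq
    simp [stdv, this])
  have h4 : x.rep 4 = 0 := rep_coord_zero hx1 4 (fun q hq => by
    have : q.2 = 0 := hq
    simp [stdv, this])
  rw [← Projectivization.mk_rep x, mk_eq_mk_iff']
  refine ⟨x.rep 1, funext fun i => ?_⟩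
  fin_cases i <;> simp [h0, h2, h3, h4]

lemma part4 {a₂ : K} (ha : a₂ ≠ 0) :
    zariskiClosure (phiG '' {p : K × K | p.2 = a₂}) ∩
    (zariskiClosure (Set.range (phiG (K := K))) \ Set.range (phiG (K := K))) =
    {Projectivization.mk K ![0, 0, 0, 0, 1] ne_e4} := by
  apply Set.eq_singleton_iff_unique_mem.mpr
  refine ⟨⟨e4_mem_H2 ha, e4_mem_X, not_range_of_zero _ _ rfl⟩, ?_⟩
  rintro x ⟨hx1, hxX, hxNR⟩
  have h0 : x.rep 0 = 0 := rep_zero_eq_zero x hxX hxNR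
  have h3 : x.rep 3 = 0 := by
    have := rep_rel2 x hxX
    rw [h0, zero_mul] at this
    exact pow_eq_zero_iff (n := 2) (by norm_num) |>.mp this.symm
  have h2 : x.rep 2 = 0 := by
    have := rep_lin hx1 2 0 a₂ (fun q hq => by
      have : q.2 = a₂ := hq
      simp [stdv, this])
    rw [this, h0, mul_zero]
  have h1 : x.rep 1 = 0 := by
    have := rep_lin hx1 3 1 a₂ (fun q hq => by
      have : q.2 = a₂ := hq
      simp [stdv, this, mul_comm])
    rw [h3] at this
    exact (mul_eq_zero.mp this.symm).resolve_left ha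
  rw [← Projectivization.mk_rep x, mk_eq_mk_iff']
  refine ⟨x.rep 4, funext fun i => ?_⟩
  fin_cases i <;> simp [h0, h1, h2, h3]

lemma e2_ne_e1 : Projectivization.mk K (![0, 0, 1, 0, 0] : Fin 5 → K) ne_e2 ≠
    Projectivization.mk K (![0, 1, 0, 0, 0] : Fin 5 → K) ne_e1 := by
  rw [Ne, mk_eq_mk_iff']
  rintro ⟨a, ha⟩
  have := congrFun ha 2
  simp at this

lemma e2_ne_e4 : Projectivization.mk K (![0, 0, 1, 0, 0] : Fin 5 → K) ne_e2 ≠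
    Projectivization.mk K (![0, 0, 0, 0, 1] : Fin 5 → K) ne_e4 := by
  rw [Ne, mk_eq_mk_iff']
  rintro ⟨a, ha⟩
  have := congrFun ha 2
  simp at this

lemma e4_ne_e1 : Projectivization.mk K (![0, 0, 0, 0, 1] : Fin 5 → K) ne_e4 ≠
    Projectivization.mk K (![0, 1, 0, 0, 0] : Fin 5 → K) ne_e1 := by
  rw [Ne, mk_eq_mk_iff']
  rintro ⟨a, ha⟩
  have := congrFun ha 4
  simp at this

end mainparts

/-- For the embedding `φ(x,y) = [1:x:y:xy:x²y²]` of `𝔸²` in `ℙ⁴`, with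
`X` the closure of `φ(𝔸²)` and `H₁(a) = {x = a₁}`, `H₂(a) = {y = a₂}`: the unique point
at infinity of the closure of `φ(H₁(a))` is `[0:0:1:0:0]` if `a₁ = 0` and `[0:0:0:0:1]`
otherwise, that of `φ(H₂(a))` is `[0:1:0:0:0]` if `a₂ = 0` and `[0:0:0:0:1]` otherwise,
and the two closures have disjoint intersections with `X ∖ φ(𝔸²)` iff `a₁ = 0` or
`a₂ = 0`. -/
theorem closures_at_infinity_xy_example
    {K : Type*} [Field K] [IsAlgClosed K] (a₁ a₂ : K) :
    (a₁ = 0 →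
      zariskiClosure (phiG '' {p : K × K | p.1 = a₁}) ∩
          (zariskiClosure (Set.range (phiG (K := K))) \ Set.range (phiG (K := K))) =
        {Projectivization.mk K ![0, 0, 1, 0, 0]
          (by intro h; have := congrFun h 2; simp at this)}) ∧
    (a₁ ≠ 0 →
      zariskiClosure (phiG '' {p : K × K | p.1 = a₁}) ∩
          (zariskiClosure (Set.range (phiG (K := K))) \ Set.range (phiG (K := K))) =
        {Projectivization.mk K ![0, 0, 0, 0, 1]
          (by intro h; have := congrFun h 4; simp at this)}) ∧
    (a₂ = 0 →
      zariskiClosure (phiG '' {p : K × K | p.2 = a₂}) ∩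
          (zariskiClosure (Set.range (phiG (K := K))) \ Set.range (phiG (K := K))) =
        {Projectivization.mk K ![0, 1, 0, 0, 0]
          (by intro h; have := congrFun h 1; simp at this)}) ∧
    (a₂ ≠ 0 →
      zariskiClosure (phiG '' {p : K × K | p.2 = a₂}) ∩
          (zariskiClosure (Set.range (phiG (K := K))) \ Set.range (phiG (K := K))) =
        {Projectivization.mk K ![0, 0, 0, 0, 1]
          (by intro h; have := congrFun h 4; simp at this)}) ∧
    ((zariskiClosure (phiG '' {p : K × K | p.1 = a₁}) ∩
        zariskiClosure (phiG '' {p : K × K | p.2 = a₂}) ∩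
        (zariskiClosure (Set.range (phiG (K := K))) \ Set.range (phiG (K := K))) = ∅) ↔
      (a₁ = 0 ∨ a₂ = 0)) := by
  refine ⟨?_, ?_, ?_, ?_, ?_⟩
  · intro h; subst h; exact part1
  · intro h; exact part2 h
  · intro h; subst h; exact part3
  · intro h; exact part4 h
  · constructor
    · intro hemp
      by_contra hc
      push_neg at hc
      obtain ⟨h1, h2⟩ := hc
      have hmem : Projectivization.mk K (![0, 0, 0, 0, 1] : Fin 5 → K) ne_e4 ∈
          (zariskiClosure (phiG '' {p : K × K | p.1 = a₁}) ∩
            zariskiClosure (phiG '' {p : K × K | p.2 = a₂}) ∩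
            (zariskiClosure (Set.range (phiG (K := K))) \ Set.range (phiG (K := K)))) :=
        ⟨⟨e4_mem_H1 h1, e4_mem_H2 h2⟩, e4_mem_X, not_range_of_zero _ _ rfl⟩
      rw [hemp] at hmem
      exact hmem
    · intro h
      apply Set.eq_empty_iff_forall_notMem.mpr
      rintro x ⟨⟨hx1, hx2⟩, hxD⟩
      rcases h with h | h
      · subst h
        have hA : x = Projectivization.mk K (![0, 0, 1, 0, 0] : Fin 5 → K) ne_e2 :=
          (Set.eq_singleton_iff_unique_mem.mp part1).2 x ⟨hx1, hxD⟩
        by_cases h2 : a₂ = 0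
        · subst h2
          have hB : x = Projectivization.mk K (![0, 1, 0, 0, 0] : Fin 5 → K) ne_e1 :=
            (Set.eq_singleton_iff_unique_mem.mp part3).2 x ⟨hx2, hxD⟩
          exact e2_ne_e1 (hA.symm.trans hB)
        · have hB : x = Projectivization.mk K (![0, 0, 0, 0, 1] : Fin 5 → K) ne_e4 :=
            (Set.eq_singleton_iff_unique_mem.mp (part4 h2)).2 x ⟨hx2, hxD⟩
          exact e2_ne_e4 (hA.symm.trans hB)
      · subst h
        have hA : x = Projectivization.mk K (![0, 1, 0, 0, 0] : Fin 5 → K) ne_e1 :=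
          (Set.eq_singleton_iff_unique_mem.mp part3).2 x ⟨hx2, hxD⟩
        by_cases h1 : a₁ = 0
        · subst h1
          have hB : x = Projectivization.mk K (![0, 0, 1, 0, 0] : Fin 5 → K) ne_e2 :=
            (Set.eq_singleton_iff_unique_mem.mp part1).2 x ⟨hx1, hxD⟩
          exact e2_ne_e1 (hB.symm.trans hA)
        · have hB : x = Projectivization.mk K (![0, 0, 0, 0, 1] : Fin 5 → K) ne_e4 :=
            (Set.eq_singleton_iff_unique_mem.mp (part2 h1)).2 x ⟨hx1, hxD⟩
          exact e4_ne_e1 (hB.symm.trans hA)
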